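/- Let (𝒰,𝒱) be a cotorsion pair on an exact category 𝓑 with enough projectives and injectives. Given a reflection sequence B ↣ Z ↠ U for B (so U ∈ 𝒰, Z ∈ 𝓑⁺, and there is a commutative diagram from a projective presentation ΩU ↣ P ↠ U to B ↣ Z ↠ U whose left vertical map x : ΩU → B factors through 𝒰), the objects Z and B⁺ are isomorphic in the quotient category 𝓑/𝒲. -/

import Mathlib

open CategoryTheory Limits ZeroObject

universe v u

variable (C : Type u) [Category.{v} C] [Preadditive C] [HasZeroObject C]
  [HasBinaryBiproducts C]

/-- An exact structure (in the sense of Quillen) on an additive category,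
given by a class of short exact sequences (conflations). -/
structure ExactStructure : Type (max u (v + 1)) where
  /-- the class of short exact sequences -/
  IsSES : ∀ {A B X : C}, (A ⟶ B) → (B ⟶ X) → Prop
  comp_zero : ∀ {A B X : C} {f : A ⟶ B} {g : B ⟶ X}, IsSES f g → f ≫ g = 0
  isKernel : ∀ {A B X : C} {f : A ⟶ B} {g : B ⟶ X} (h : IsSES f g),
      Nonempty (IsLimit (KernelFork.ofι f (comp_zero h)))
  isCokernel : ∀ {A B X : C} {f : A ⟶ B} {g : B ⟶ X} (h : IsSES f g),
      Nonempty (IsColimit (CokernelCofork.ofπ g (comp_zero h)))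
  ses_iso_congr : ∀ {A B X A' B' X' : C} {f : A ⟶ B} {g : B ⟶ X}
      (eA : A' ≅ A) (eB : B ≅ B') (eX : X ≅ X'), IsSES f g →
      IsSES (eA.hom ≫ f ≫ eB.hom) (eB.inv ≫ g ≫ eX.hom)
  id_ses : ∀ A : C, IsSES (𝟙 A) (0 : A ⟶ 0)
  id_ses' : ∀ A : C, IsSES (0 : (0 : C) ⟶ A) (𝟙 A)
  infl_comp : ∀ {A B X : C} (f : A ⟶ B) (f' : B ⟶ X),
      (∃ (Z : C) (g : B ⟶ Z), IsSES f g) → (∃ (Z : C) (g : X ⟶ Z), IsSES f' g) →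
      ∃ (Z : C) (g : X ⟶ Z), IsSES (f ≫ f') g
  defl_comp : ∀ {A B X : C} (g : A ⟶ B) (g' : B ⟶ X),
      (∃ (Z : C) (f : Z ⟶ A), IsSES f g) → (∃ (Z : C) (f : Z ⟶ B), IsSES f g') →
      ∃ (Z : C) (f : Z ⟶ A), IsSES f (g ≫ g')
  pushout_infl : ∀ {A B A' : C} (f : A ⟶ B) (a : A ⟶ A'),
      (∃ (Z : C) (g : B ⟶ Z), IsSES f g) →
      ∃ (P : C) (f' : A' ⟶ P) (b : B ⟶ P), IsPushout a f f' b ∧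
        ∃ (Z : C) (g : P ⟶ Z), IsSES f' g
  pullback_defl : ∀ {B X X' : C} (g : B ⟶ X) (x : X' ⟶ X),
      (∃ (Z : C) (f : Z ⟶ B), IsSES f g) →
      ∃ (P : C) (g' : P ⟶ X') (b : P ⟶ B), IsPullback g' b x g ∧
        ∃ (Z : C) (f : Z ⟶ P), IsSES f g'

variable {C}

namespace ExactStructure

variable (E : ExactStructure C)

/-- inflations (admissible monomorphisms) -/
def Infl {A B : C} (f : A ⟶ B) : Prop := ∃ (X : C) (g : B ⟶ X), E.IsSES f g

/-- deflations (admissible epimorphisms) -/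
def Defl {B X : C} (g : B ⟶ X) : Prop := ∃ (A : C) (f : A ⟶ B), E.IsSES f g

/-- projective objects relative to the exact structure -/
def Proj (P : C) : Prop :=
  ∀ ⦃B X : C⦄ (g : B ⟶ X), E.Defl g → ∀ h : P ⟶ X, ∃ l : P ⟶ B, l ≫ g = h

/-- injective objects relative to the exact structure -/
def Inj (I : C) : Prop :=
  ∀ ⦃A B : C⦄ (f : A ⟶ B), E.Infl f → ∀ h : A ⟶ I, ∃ l : B ⟶ I, f ≫ l = h

/-- the exact category has enough projectives -/
def EnoughProj : Prop :=
  ∀ X : C, ∃ (P K : C) (i : K ⟶ P) (p : P ⟶ X), E.Proj P ∧ E.IsSES i p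

/-- the exact category has enough injectives -/
def EnoughInj : Prop :=
  ∀ X : C, ∃ (I Z : C) (i : X ⟶ I) (p : I ⟶ Z), E.Inj I ∧ E.IsSES i p

end ExactStructure

/-- a morphism factors through an object of a given class of objects -/
def FactorsThru (S : Set C) {X Y : C} (f : X ⟶ Y) : Prop :=
  ∃ (W : C) (a : X ⟶ W) (b : W ⟶ Y), W ∈ S ∧ a ≫ b = f

/-- A cotorsion pair `(𝒰, 𝒱)` on the exact category `(C, E)`. -/
structure CotorsionPair (E : ExactStructure C) where
  U : Set C
  V : Set C
  U_summand : ∀ ⦃X Z : C⦄, Z ∈ U → (∃ (i : X ⟶ Z) (r : Z ⟶ X), i ≫ r = 𝟙 X) → X ∈ U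
  V_summand : ∀ ⦃X Z : C⦄, Z ∈ V → (∃ (i : X ⟶ Z) (r : Z ⟶ X), i ≫ r = 𝟙 X) → X ∈ V
  U_add : ∀ ⦃X Y : C⦄, X ∈ U → Y ∈ U → (X ⊞ Y) ∈ U
  V_add : ∀ ⦃X Y : C⦄, X ∈ V → Y ∈ V → (X ⊞ Y) ∈ V
  ext_vanish : ∀ ⦃A B X : C⦄ {f : A ⟶ B} {g : B ⟶ X}, E.IsSES f g → X ∈ U → A ∈ V →
      ∃ r : B ⟶ A, f ≫ r = 𝟙 A
  res : ∀ B : C, ∃ (VB UB : C) (i : VB ⟶ UB) (p : UB ⟶ B),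
      VB ∈ V ∧ UB ∈ U ∧ E.IsSES i p
  cores : ∀ B : C, ∃ (VB UB : C) (i : B ⟶ VB) (p : VB ⟶ UB),
      VB ∈ V ∧ UB ∈ U ∧ E.IsSES i p

namespace CotorsionPair

variable {E : ExactStructure C} (CP : CotorsionPair E)

/-- `𝒲 = 𝒰 ∩ 𝒱` -/
def W : Set C := CP.U ∩ CP.V

/-- `𝓑⁺`: objects admitting a short exact sequence `V ↣ W ↠ B` with `V ∈ 𝒱`, `W ∈ 𝒲`. -/
def Bplus : Set C :=
  {B | ∃ (V₀ W₀ : C) (i : V₀ ⟶ W₀) (p : W₀ ⟶ B), V₀ ∈ CP.V ∧ W₀ ∈ CP.W ∧ E.IsSES i p}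

/-- `𝓑⁻`: objects admitting a short exact sequence `B ↣ W ↠ U` with `W ∈ 𝒲`, `U ∈ 𝒰`. -/
def Bminus : Set C :=
  {B | ∃ (W₀ U₀ : C) (i : B ⟶ W₀) (p : W₀ ⟶ U₀), W₀ ∈ CP.W ∧ U₀ ∈ CP.U ∧ E.IsSES i p}

/-- the heart subcategory `𝓗 = 𝓑⁺ ∩ 𝓑⁻` -/
def Heart : Set C := CP.Bplus ∩ CP.Bminus

/-- the ideal relation defining the additive quotient `𝓑/𝒲` -/
def wRel : HomRel C := fun {X Y} f g =>
  ∃ (W : C) (a : X ⟶ W) (b : W ⟶ Y), W ∈ CP.W ∧ a ≫ b = f - g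

/-- the quotient category `𝓑/𝒲` -/
abbrev QW := CategoryTheory.Quotient CP.wRel

/-- the quotient functor `π : 𝓑 → 𝓑/𝒲` -/
abbrev qf : C ⥤ CP.QW := Quotient.functor _

/-- `𝓑⁺/𝒲` as a full subcategory of `𝓑/𝒲` -/
abbrev BplusCat := ObjectProperty.FullSubcategory (fun X : CP.QW => X.as ∈ CP.Bplus)

/-- `𝓑⁻/𝒲` as a full subcategory of `𝓑/𝒲` -/
abbrev BminusCat := ObjectProperty.FullSubcategory (fun X : CP.QW => X.as ∈ CP.Bminus)

/-- the heart `𝓗/𝒲` as a full subcategory of `𝓑/𝒲` -/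
abbrev HeartCat := ObjectProperty.FullSubcategory (fun X : CP.QW => X.as ∈ CP.Heart)

/-- the inclusion `𝓑⁺/𝒲 ↪ 𝓑/𝒲` -/
abbrev inclPlus : CP.BplusCat ⥤ CP.QW := ObjectProperty.ι _

/-- the inclusion `𝓑⁻/𝒲 ↪ 𝓑/𝒲` -/
abbrev inclMinus : CP.BminusCat ⥤ CP.QW := ObjectProperty.ι _

/-- the inclusion `𝓗/𝒲 ↪ 𝓑/𝒲` -/
abbrev inclHeart : CP.HeartCat ⥤ CP.QW := ObjectProperty.ι _

/-- `add(𝒰 ∗ 𝒱)`: objects `X` admitting a short exact sequence `U ↣ X ⊕ Y ↠ V`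
with `U ∈ 𝒰`, `V ∈ 𝒱`. -/
def addUV : Set C :=
  {X | ∃ (Y U₀ V₀ : C) (i : U₀ ⟶ X ⊞ Y) (p : X ⊞ Y ⟶ V₀),
    U₀ ∈ CP.U ∧ V₀ ∈ CP.V ∧ E.IsSES i p}

end CotorsionPair

section Helpers

variable {E : ExactStructure C}

namespace ExactStructure

lemma IsSES.mono {A B X : C} {f : A ⟶ B} {g : B ⟶ X} (h : E.IsSES f g) : Mono f := by
  obtain ⟨hl⟩ := E.isKernel h
  exact ⟨fun {T} a b hab => Fork.IsLimit.hom_ext hl (by simpa using hab)⟩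

lemma IsSES.epi {A B X : C} {f : A ⟶ B} {g : B ⟶ X} (h : E.IsSES f g) : Epi g := by
  obtain ⟨hc⟩ := E.isCokernel h
  exact ⟨fun {T} a b hab => Cofork.IsColimit.hom_ext hc (by simpa using hab)⟩

lemma IsSES.lift {A B X : C} {f : A ⟶ B} {g : B ⟶ X} (h : E.IsSES f g)
    {T : C} (t : T ⟶ B) (ht : t ≫ g = 0) : ∃ s : T ⟶ A, s ≫ f = t := by
  obtain ⟨hl⟩ := E.isKernel h
  obtain ⟨s, hs⟩ := KernelFork.IsLimit.lift' hl t ht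
  exact ⟨s, by simpa using hs⟩

lemma IsSES.desc {A B X : C} {f : A ⟶ B} {g : B ⟶ X} (h : E.IsSES f g)
    {T : C} (t : B ⟶ T) (ht : f ≫ t = 0) : ∃ s : X ⟶ T, g ≫ s = t := by
  obtain ⟨hc⟩ := E.isCokernel h
  obtain ⟨s, hs⟩ := CokernelCofork.IsColimit.desc' hc t ht
  exact ⟨s, by simpa using hs⟩

lemma IsSES.congr_right {A B X X' : C} {f : A ⟶ B} {g : B ⟶ X} (h : E.IsSES f g)
    (e : X ≅ X') : E.IsSES f (g ≫ e.hom) := by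
  simpa using E.ses_iso_congr (Iso.refl _) (Iso.refl _) e h

lemma IsSES.of_iso_mid {A B B' X : C} {f : A ⟶ B} {g : B ⟶ X} (h : E.IsSES f g)
    (i : B ⟶ B') (i' : B' ⟶ B) (hi : i ≫ i' = 𝟙 B) (hi' : i' ≫ i = 𝟙 B') :
    E.IsSES (f ≫ i) (i' ≫ g) := by
  simpa using E.ses_iso_congr (Iso.refl A) ⟨i, i', hi, hi'⟩ (Iso.refl X) h

/-- The short five lemma: a morphism of conflations which is the identity on the
kernels and on the cokernels has invertible middle map. -/
lemma five {A M M' X : C} {f : A ⟶ M} {e : M ⟶ X} {f' : A ⟶ M'} {e' : M' ⟶ X}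
    (h1 : E.IsSES f e) (h2 : E.IsSES f' e') (u : M ⟶ M')
    (hu1 : f ≫ u = f') (hu2 : u ≫ e' = e) : IsIso u := by
  have humono : Mono u := by
    refine ⟨fun {T} a b hab => ?_⟩
    have h0 : (a - b) ≫ u = 0 := by rw [Preadditive.sub_comp, hab, sub_self]
    have h1' : (a - b) ≫ e = 0 := by
      rw [← hu2, ← Category.assoc, h0, Limits.zero_comp]
    obtain ⟨s, hs⟩ := h1.lift (a - b) h1'
    have hsf : s ≫ f' = 0 := by rw [← hu1, ← Category.assoc, hs, h0]
    haveI := h2.mono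
    have hs0 : s = 0 := by
      rw [← cancel_mono f', hsf, Limits.zero_comp]
    have : a - b = 0 := by rw [← hs, hs0, Limits.zero_comp]
    exact sub_eq_zero.mp this
  have huepi : Epi u := by
    refine ⟨fun {T} a b hab => ?_⟩
    have h0 : u ≫ (a - b) = 0 := by rw [Preadditive.comp_sub, hab, sub_self]
    have hf : f' ≫ (a - b) = 0 := by rw [← hu1, Category.assoc, h0, Limits.comp_zero]
    obtain ⟨s, hs⟩ := h2.desc (a - b) hf
    have hse : e ≫ s = 0 := by rw [← hu2, Category.assoc, hs, h0]
    haveI := h1.epi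
    have hs0 : s = 0 := by
      rw [← cancel_epi e, hse, Limits.comp_zero]
    have : a - b = 0 := by rw [← hs, hs0, Limits.comp_zero]
    exact sub_eq_zero.mp this
  -- pullback of e' along e
  obtain ⟨PB, g', b', H, K, kk, hk⟩ := E.pullback_defl e' e ⟨_, _, h2⟩
  have hdw : (𝟙 M) ≫ e = u ≫ e' := by rw [Category.id_comp, hu2]
  set d : M ⟶ PB := H.lift (𝟙 M) u hdw with hddef
  have hd1 : d ≫ g' = 𝟙 M := H.lift_fst _ _ _
  have hd2 : d ≫ b' = u := H.lift_snd _ _ _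
  have hkg : kk ≫ g' = 0 := E.comp_zero hk
  have hsk : (𝟙 PB - g' ≫ d) ≫ g' = 0 := by
    rw [Preadditive.sub_comp, Category.id_comp, Category.assoc, hd1, Category.comp_id, sub_self]
  obtain ⟨r, hr⟩ := hk.lift (𝟙 PB - g' ≫ d) hsk
  haveI := hk.mono
  have hkr : kk ≫ r = 𝟙 K := by
    rw [← cancel_mono kk, Category.assoc, hr, Preadditive.comp_sub, Category.comp_id,
      ← Category.assoc, hkg, Limits.zero_comp, sub_zero, Category.id_comp]
  have hdr : d ≫ r = 0 := by
    rw [← cancel_mono kk, Category.assoc, hr, Preadditive.comp_sub, Category.comp_id,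
      ← Category.assoc, hd1, Category.id_comp, sub_self, Limits.zero_comp]
  -- symmetric pullback, to see that b' is a deflation
  obtain ⟨PB₂, g₂, b₂, H₂, K₂, k₂, hk₂⟩ := E.pullback_defl e e' ⟨_, _, h1⟩
  set j₁ : PB ⟶ PB₂ := H₂.lift b' g' H.w.symm with hj₁def
  set j₂ : PB₂ ⟶ PB := H.lift b₂ g₂ H₂.w.symm with hj₂def
  have hj₁g : j₁ ≫ g₂ = b' := H₂.lift_fst _ _ _
  have hj₁b : j₁ ≫ b₂ = g' := H₂.lift_snd _ _ _
  have hj₂g : j₂ ≫ g' = b₂ := H.lift_fst _ _ _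
  have hj₂b : j₂ ≫ b' = g₂ := H.lift_snd _ _ _
  have hj21 : j₂ ≫ j₁ = 𝟙 PB₂ := by
    apply H₂.hom_ext
    · rw [Category.assoc, hj₁g, hj₂b, Category.id_comp]
    · rw [Category.assoc, hj₁b, hj₂g, Category.id_comp]
  have hj12 : j₁ ≫ j₂ = 𝟙 PB := by
    apply H.hom_ext
    · rw [Category.assoc, hj₂g, hj₁b, Category.id_comp]
    · rw [Category.assoc, hj₂b, hj₁g, Category.id_comp]
  have hk' : E.IsSES (k₂ ≫ j₂) b' := by
    have := hk₂.of_iso_mid j₂ j₁ hj21 hj12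
    rwa [hj₁g] at this
  -- σ : kernel maps
  have hkb0 : kk ≫ b' ≫ e' = 0 := by
    rw [← H.w, ← Category.assoc, hkg, Limits.zero_comp]
  obtain ⟨σ, hσ⟩ := h2.lift (kk ≫ b') (by rw [Category.assoc, hkb0])
  -- the splitting PB ≅ M ⊞ K
  set Φh : M ⊞ K ⟶ PB := biprod.desc d kk with hΦhdef
  set Φi : PB ⟶ M ⊞ K := biprod.lift g' r with hΦidef
  have hΦ1 : Φh ≫ Φi = 𝟙 (M ⊞ K) := by
    apply biprod.hom_ext' <;> apply biprod.hom_ext <;>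
      simp [hΦhdef, hΦidef, hd1, hdr, hkg, hkr]
  have hΦ2 : Φi ≫ Φh = 𝟙 PB := by
    rw [hΦidef, hΦhdef, biprod.lift_desc, hr]
    abel
  have hkb'' : E.IsSES ((k₂ ≫ j₂) ≫ Φi) (Φh ≫ b') := hk'.of_iso_mid Φi Φh hΦ2 hΦ1
  -- the shear automorphism
  set sM : M ⊞ K ⟶ M ⊞ K := biprod.snd ≫ σ ≫ f ≫ biprod.inl with hsMdef
  have hss : sM ≫ sM = 0 := by
    simp [hsMdef]
  set Th : M ⊞ K ⟶ M ⊞ K := 𝟙 (M ⊞ K) + sM with hThdef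
  set Ti : M ⊞ K ⟶ M ⊞ K := 𝟙 (M ⊞ K) - sM with hTidef
  have hT1 : Th ≫ Ti = 𝟙 (M ⊞ K) := by
    simp only [hThdef, hTidef, Preadditive.add_comp, Preadditive.comp_sub, Category.id_comp, Category.comp_id, hss,
      sub_zero]
    abel
  have hT2 : Ti ≫ Th = 𝟙 (M ⊞ K) := by
    simp only [hThdef, hTidef, Preadditive.sub_comp, Preadditive.comp_add, Category.id_comp, Category.comp_id, hss,
      sub_zero]
    abel
  have h5 : Φh ≫ b' = Th ≫ (biprod.fst ≫ u) := by
    apply biprod.hom_ext'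
    · simp [hΦhdef, hThdef, hsMdef, hd2]
    · have : kk ≫ b' = σ ≫ f ≫ u := by rw [← hσ, hu1]
      simp [hΦhdef, hThdef, hsMdef, this]
  have hρ : E.IsSES ((((k₂ ≫ j₂) ≫ Φi) ≫ Th)) (biprod.fst ≫ u) := by
    have h6 := hkb''.of_iso_mid Th Ti hT1 hT2
    rw [h5, ← Category.assoc, hT2, Category.id_comp] at h6
    exact h6
  set ρ : K₂ ⟶ M ⊞ K := ((k₂ ≫ j₂) ≫ Φi) ≫ Th with hρdef
  have hρ0 : ρ ≫ biprod.fst = 0 := by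
    have h0 : (ρ ≫ biprod.fst) ≫ u = 0 := by
      rw [Category.assoc]; exact E.comp_zero hρ
    rw [← cancel_mono u, h0, Limits.zero_comp]
  obtain ⟨θ, hθ⟩ := hρ.desc biprod.fst hρ0
  have huθ : u ≫ θ = 𝟙 M := by
    have h6 : (biprod.inl : M ⟶ M ⊞ K) ≫ (biprod.fst ≫ u) ≫ θ =
        (biprod.inl : M ⟶ M ⊞ K) ≫ biprod.fst := by
      rw [hθ]
    simpa using h6
  have hθu : θ ≫ u = 𝟙 M' := by
    rw [← cancel_epi u, ← Category.assoc, huθ, Category.id_comp, Category.comp_id]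
  exact ⟨θ, huθ, hθu⟩

end ExactStructure

namespace CotorsionPair

variable {E : ExactStructure C} (CP : CotorsionPair E)

/-- Any morphism from an object of `𝒰` lifts across a deflation with kernel in `𝒱`. -/
lemma lift_of_U {V₀ W₀ Y U' : C} {i : V₀ ⟶ W₀} {pr : W₀ ⟶ Y}
    (hses : E.IsSES i pr) (hV : V₀ ∈ CP.V) (hU' : U' ∈ CP.U) (h : U' ⟶ Y) :
    ∃ l : U' ⟶ W₀, l ≫ pr = h := by
  obtain ⟨PB, g', bb, HPB, K, kk, hk⟩ := E.pullback_defl pr h ⟨_, _, hses⟩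
  have hjw : (0 : V₀ ⟶ U') ≫ h = i ≫ pr := by rw [Limits.zero_comp, E.comp_zero hses]
  set j : V₀ ⟶ PB := HPB.lift 0 i hjw with hjdef
  have hj1 : j ≫ g' = 0 := HPB.lift_fst _ _ _
  have hj2 : j ≫ bb = i := HPB.lift_snd _ _ _
  obtain ⟨e, he⟩ := hk.lift j hj1
  have hkpr : (kk ≫ bb) ≫ pr = 0 := by
    rw [Category.assoc, ← HPB.w, ← Category.assoc, E.comp_zero hk, Limits.zero_comp]
  obtain ⟨e', he'⟩ := hses.lift (kk ≫ bb) hkpr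
  haveI := hk.mono
  have hee : e' ≫ e = 𝟙 K := by
    rw [← cancel_mono kk, Category.assoc, he, Category.id_comp]
    apply HPB.hom_ext
    · rw [Category.assoc, hj1, Limits.comp_zero, E.comp_zero hk]
    · rw [Category.assoc, hj2, he']
  have hKV : K ∈ CP.V := CP.V_summand hV ⟨e', e, hee⟩
  obtain ⟨r, hr⟩ := CP.ext_vanish hk hU' hKV
  have hsk : kk ≫ (𝟙 PB - r ≫ kk) = 0 := by
    rw [Preadditive.comp_sub, Category.comp_id, ← Category.assoc, hr, Category.id_comp, sub_self]
  obtain ⟨s, hs⟩ := hk.desc (𝟙 PB - r ≫ kk) hsk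
  haveI := hk.epi
  have hsg : s ≫ g' = 𝟙 U' := by
    rw [← cancel_epi g', ← Category.assoc, hs, Preadditive.sub_comp, Category.id_comp,
      Category.assoc, E.comp_zero hk, Limits.comp_zero, sub_zero, Category.comp_id]
  refine ⟨s ≫ bb, ?_⟩
  rw [Category.assoc, ← HPB.w, ← Category.assoc, hsg, Category.id_comp]

/-- Any morphism to an object of `𝒱` extends across an inflation with cokernel in `𝒰`. -/
lemma extend_to_V {A M X' V' : C} {f : A ⟶ M} {g : M ⟶ X'}
    (hses : E.IsSES f g) (hU' : X' ∈ CP.U) (hV' : V' ∈ CP.V) (h : A ⟶ V') :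
    ∃ l : M ⟶ V', f ≫ l = h := by
  obtain ⟨PO, f', bb, HPO, Cc, c, hc⟩ := E.pushout_infl f h ⟨_, _, hses⟩
  have hd0 : h ≫ (0 : V' ⟶ X') = f ≫ g := by rw [Limits.comp_zero, E.comp_zero hses]
  set dd : PO ⟶ X' := HPO.desc 0 g hd0 with hdddef
  have hd1 : f' ≫ dd = 0 := HPO.inl_desc _ _ _
  have hd2 : bb ≫ dd = g := HPO.inr_desc _ _ _
  obtain ⟨w, hw⟩ := hc.desc dd hd1
  have hfw : f ≫ (bb ≫ c) = 0 := by
    rw [← Category.assoc, ← HPO.w, Category.assoc, E.comp_zero hc, Limits.comp_zero]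
  obtain ⟨w', hw'⟩ := hses.desc (bb ≫ c) hfw
  haveI := hc.epi
  have hww : w ≫ w' = 𝟙 Cc := by
    rw [← cancel_epi c, ← Category.assoc, hw, Category.comp_id]
    apply HPO.hom_ext
    · rw [← Category.assoc, hd1, Limits.zero_comp, E.comp_zero hc]
    · rw [← Category.assoc, hd2, hw']
  have hCU : Cc ∈ CP.U := CP.U_summand hU' ⟨w, w', hww⟩
  obtain ⟨r, hr⟩ := CP.ext_vanish hc hCU hV'
  refine ⟨bb ≫ r, ?_⟩
  rw [← Category.assoc, ← HPO.w, Category.assoc, hr, Category.comp_id]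

end CotorsionPair

end Helpers



/-- for any reflection sequence `B ↣ Z ↠ U` for `B`, one has `Z ≅ B⁺`
in the quotient category `𝓑/𝒲`, where `B⁺` is the canonical construction. -/
theorem stmt6 (E : ExactStructure C) (CP : CotorsionPair E)
    (hEP : E.EnoughProj) (hEI : E.EnoughInj)
    {B Z U : C} (z : B ⟶ Z) (zc : Z ⟶ U) (hU : U ∈ CP.U) (hZ : Z ∈ CP.Bplus)
    (hses : E.IsSES z zc)
    {ΩU P : C} (q : ΩU ⟶ P) (pU : P ⟶ U) (hproj : E.Proj P) (hsesq : E.IsSES q pU)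
    (x : ΩU ⟶ B) (p : P ⟶ Z) (hc1 : q ≫ p = x ≫ z) (hc2 : p ≫ zc = pU)
    (hx : FactorsThru CP.U x)
    {VB UB W0B U0B Bp : C} {vB : VB ⟶ UB} {uB : UB ⟶ B} {wB' : UB ⟶ W0B}
    {w0B : W0B ⟶ U0B} {αB : B ⟶ Bp} {wB : W0B ⟶ Bp} {pB : Bp ⟶ U0B}
    (hVB : VB ∈ CP.V) (hUB : UB ∈ CP.U) (hW0B : W0B ∈ CP.W) (hU0B : U0B ∈ CP.U)
    (h1B : E.IsSES vB uB) (h2B : E.IsSES wB' w0B)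
    (hpoB : IsPushout uB wB' αB wB) (h3B : E.IsSES αB pB)
    :
    Nonempty (CP.qf.obj Z ≅ CP.qf.obj Bp) := by
  -- `wB` is an epimorphism
  haveI huBepi : Epi uB := h1B.epi
  have hwBepi : Epi wB := by
    refine ⟨fun {T} a b hab => ?_⟩
    have h6 : αB ≫ a = αB ≫ b := by
      rw [← cancel_epi uB]
      calc uB ≫ αB ≫ a = wB' ≫ wB ≫ a := by
            rw [← Category.assoc, hpoB.w, Category.assoc]
        _ = wB' ≫ wB ≫ b := by rw [hab]
        _ = uB ≫ αB ≫ b := by rw [← Category.assoc, ← hpoB.w, Category.assoc]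
    exact hpoB.hom_ext h6 hab
  haveI := hwBepi
  -- `VB ↣ W0B ↠ Bp` is a conflation, hence `Bp ∈ 𝓑⁺`
  obtain ⟨Z₀, g₀, h₀⟩ := E.infl_comp vB wB' ⟨_, _, h1B⟩ ⟨_, _, h2B⟩
  have hvw0 : (vB ≫ wB') ≫ wB = 0 := by
    rw [Category.assoc, ← hpoB.w, ← Category.assoc, E.comp_zero h1B, Limits.zero_comp]
  obtain ⟨e, he⟩ := h₀.desc wB hvw0
  have hvg : vB ≫ (wB' ≫ g₀) = 0 := by
    rw [← Category.assoc, E.comp_zero h₀]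
  obtain ⟨s, hs⟩ := h1B.desc (wB' ≫ g₀) hvg
  set e' : Bp ⟶ Z₀ := hpoB.desc s g₀ hs with he'def
  have he'2 : wB ≫ e' = g₀ := hpoB.inr_desc _ _ _
  haveI := h₀.epi
  have hee' : e ≫ e' = 𝟙 Z₀ := by
    rw [← cancel_epi g₀, ← Category.assoc, he, he'2, Category.comp_id]
  have he'e : e' ≫ e = 𝟙 Bp := by
    rw [← cancel_epi wB, ← Category.assoc, he'2, he, Category.comp_id]
  have hsesBp : E.IsSES (vB ≫ wB') wB := by
    have h7 := h₀.congr_right ⟨e, e', hee', he'e⟩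
    rwa [he] at h7
  -- construction of `ff : Bp ⟶ Z`
  obtain ⟨V₀, W₀, i₀, p₀, hV₀, hW₀, hses₀⟩ := hZ
  obtain ⟨t, ht⟩ := CP.lift_of_U hses₀ hV₀ hUB (uB ≫ z)
  obtain ⟨s₁, hs₁⟩ := CP.extend_to_V h2B hU0B hW₀.2 t
  have hffw : uB ≫ z = wB' ≫ (s₁ ≫ p₀) := by
    rw [← Category.assoc, hs₁, ht]
  set ff : Bp ⟶ Z := hpoB.desc z (s₁ ≫ p₀) hffw with hffdef
  have hff1 : αB ≫ ff = z := hpoB.inl_desc _ _ _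
  -- construction of `gg : Z ⟶ Bp`
  obtain ⟨W', a, bW, hW'U, habW⟩ := hx
  obtain ⟨l, hl⟩ := CP.lift_of_U hsesBp hVB hW'U (bW ≫ αB)
  obtain ⟨m, hm⟩ := CP.extend_to_V hsesq hU hW0B.2 (a ≫ l)
  have hφ : q ≫ (m ≫ wB) = x ≫ αB := by
    rw [← Category.assoc, hm, Category.assoc, hl, ← Category.assoc, habW]
  obtain ⟨Q, f', b, HQ, X₀, c, hc⟩ := E.pushout_infl q x ⟨_, _, hsesq⟩
  set uu : Q ⟶ Z := HQ.desc z p hc1.symm with huudef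
  have huu1 : f' ≫ uu = z := HQ.inl_desc _ _ _
  have huu2 : b ≫ uu = p := HQ.inr_desc _ _ _
  have hfc0 : f' ≫ (uu ≫ zc) = 0 := by
    rw [← Category.assoc, huu1, E.comp_zero hses]
  obtain ⟨w, hw⟩ := hc.desc (uu ≫ zc) hfc0
  have hqbc : q ≫ (b ≫ c) = 0 := by
    rw [← Category.assoc, ← HQ.w, Category.assoc, E.comp_zero hc, Limits.comp_zero]
  obtain ⟨w', hw'⟩ := hsesq.desc (b ≫ c) hqbc
  haveI := hsesq.epi
  haveI := hc.epi
  have hw'w : w' ≫ w = 𝟙 U := by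
    rw [← cancel_epi pU, ← Category.assoc, hw', Category.assoc, hw, ← Category.assoc,
      huu2, hc2, Category.comp_id]
  have hww' : w ≫ w' = 𝟙 X₀ := by
    rw [← cancel_epi c, ← Category.assoc, hw, Category.comp_id]
    apply HQ.hom_ext
    · rw [← Category.assoc, ← Category.assoc, huu1, E.comp_zero hses, Limits.zero_comp,
        E.comp_zero hc]
    · rw [← Category.assoc, ← Category.assoc, huu2, hc2, hw']
  have hc' : E.IsSES f' (c ≫ w) := hc.congr_right ⟨w, w', hww', hw'w⟩
  haveI huuIso : IsIso uu := E.five hc' hses uu huu1 hw.symm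
  set θ' : Q ⟶ Bp := HQ.desc αB (m ≫ wB) hφ.symm with hθ'def
  have hθ'1 : f' ≫ θ' = αB := HQ.inl_desc _ _ _
  set gg : Z ⟶ Bp := inv uu ≫ θ' with hggdef
  have hgg : z ≫ gg = αB := by
    rw [hggdef, ← huu1, Category.assoc, IsIso.hom_inv_id_assoc, hθ'1]
  -- the two composites are the identity modulo 𝒲
  have hrel1 : CP.wRel (gg ≫ ff) (𝟙 Z) := by
    have hz0 : z ≫ (gg ≫ ff - 𝟙 Z) = 0 := by
      rw [Preadditive.comp_sub, ← Category.assoc, hgg, hff1, Category.comp_id, sub_self]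
    obtain ⟨h₁, hh₁⟩ := hses.desc _ hz0
    obtain ⟨l₁, hl₁⟩ := CP.lift_of_U hses₀ hV₀ hU h₁
    exact ⟨W₀, zc ≫ l₁, p₀, hW₀, by rw [Category.assoc, hl₁, hh₁]⟩
  have hrel2 : CP.wRel (ff ≫ gg) (𝟙 Bp) := by
    have hα0 : αB ≫ (ff ≫ gg - 𝟙 Bp) = 0 := by
      rw [Preadditive.comp_sub, ← Category.assoc, hff1, hgg, Category.comp_id, sub_self]
    obtain ⟨h₂, hh₂⟩ := h3B.desc _ hα0
    obtain ⟨l₂, hl₂⟩ := CP.lift_of_U hsesBp hVB hU0B h₂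
    exact ⟨W0B, pB ≫ l₂, wB, hW0B, by rw [Category.assoc, hl₂, hh₂]⟩
  refine ⟨⟨CP.qf.map gg, CP.qf.map ff, ?_, ?_⟩⟩
  · rw [← Functor.map_comp]
    exact (CategoryTheory.Quotient.sound CP.wRel hrel1).trans (CP.qf.map_id Z)
  · rw [← Functor.map_comp]
    exact (CategoryTheory.Quotient.sound CP.wRel hrel2).trans (CP.qf.map_id Bp)
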